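/- Let q ≥ 2, m ≥ 3 odd, n = q^m - 1, t ≥ 1, and let h satisfy 3 ≤ h ≤ (m-1)/2. Let i = 1 + Σ_{l=1}^{t} q^{i_l} and j = 1 + Σ_{l=1}^{t} q^{j_l}, where 0 < i_1 < ... < i_t ≤ h-1 and 0 < j_1 < ... < j_t ≤ h-1, and i ≠ j. Then there is no u with 0 ≤ u ≤ m-1 such that i·q^u ≡ j (mod n). -/

import Mathlib

private lemma geom_bound (q : ℕ) (hq : 2 ≤ q) : ∀ h : ℕ, ∑ e ∈ Finset.range h, q ^ e ≤ q ^ h - 1 := by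
  intro h
  induction h with
  | zero => simp
  | succ h ih =>
    rw [Finset.sum_range_succ]
    have h1 : 1 ≤ q ^ h := Nat.one_le_pow _ _ (by omega)
    have h2 : 2 * q ^ h ≤ q ^ (h + 1) := by
      rw [pow_succ]
      nlinarith
    omega

private lemma sum_lt (q h t : ℕ) (hq : 2 ≤ q) (hh : 1 ≤ h) (c : Fin t → ℕ)
    (hc : StrictMono c) (hc0 : ∀ l, 0 < c l) (hch : ∀ l, c l ≤ h - 1) :
    1 + ∑ l, q ^ c l < q ^ h := by
  have hinj : Function.Injective c := hc.injective
  have h1 : ∑ l, q ^ c l = ∑ e ∈ Finset.univ.image c, q ^ e :=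
    (Finset.sum_image (fun x _ y _ hxy => hinj hxy)).symm
  have h2 : Finset.univ.image c ⊆ Finset.Icc 1 (h - 1) := by
    intro e he
    simp only [Finset.mem_image] at he
    obtain ⟨l, _, rfl⟩ := he
    exact Finset.mem_Icc.mpr ⟨hc0 l, hch l⟩
  have h3 : ∑ e ∈ Finset.univ.image c, q ^ e ≤ ∑ e ∈ Finset.Icc 1 (h - 1), q ^ e :=
    Finset.sum_le_sum_of_subset h2
  have h0 : (0 : ℕ) ∉ Finset.Icc 1 (h - 1) := by simp
  have h4 : 1 + ∑ e ∈ Finset.Icc 1 (h - 1), q ^ e = ∑ e ∈ Finset.range h, q ^ e := by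
    have : insert 0 (Finset.Icc 1 (h - 1)) = Finset.range h := by
      ext x
      simp only [Finset.mem_insert, Finset.mem_Icc, Finset.mem_range]
      omega
    rw [← this, Finset.sum_insert h0, pow_zero]
  have h5 := geom_bound q hq h
  have h6 : 1 ≤ q ^ h := Nat.one_le_pow _ _ (by omega)
  omega

private lemma mod_one (q t : ℕ) (hq : 2 ≤ q) (c : Fin t → ℕ) (hc0 : ∀ l, 0 < c l) :
    (1 + ∑ l, q ^ c l) % q = 1 := by
  have hdvd : q ∣ ∑ l, q ^ c l :=
    Finset.dvd_sum (fun l _ => dvd_pow_self q (hc0 l).ne')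
  obtain ⟨k, hk⟩ := hdvd
  rw [hk, Nat.add_mul_mod_self_left, Nat.mod_eq_of_lt (by omega)]

theorem stmt17 (q m h n : ℕ) (hq : 2 ≤ q) (hm : 3 ≤ m) (hmo : Odd m)
    (hh3 : 3 ≤ h) (hh : h ≤ (m - 1) / 2) (hn : n = q ^ m - 1)
    (t : ℕ) (ht : 1 ≤ t)
    (c d : Fin t → ℕ) (hc : StrictMono c) (hd : StrictMono d)
    (hc0 : ∀ l, 0 < c l) (hch : ∀ l, c l ≤ h - 1)
    (hd0 : ∀ l, 0 < d l) (hdh : ∀ l, d l ≤ h - 1)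
    (hne : (1 + ∑ l, q ^ c l) ≠ (1 + ∑ l, q ^ d l)) :
    ¬ ∃ u, u ≤ m - 1 ∧
      (1 + ∑ l, q ^ c l) * q ^ u ≡ (1 + ∑ l, q ^ d l) [MOD n] := by
  rintro ⟨u, hu, hmod⟩
  set i := 1 + ∑ l, q ^ c l with hi
  set j := 1 + ∑ l, q ^ d l with hj
  obtain ⟨k, hk⟩ := hmo
  have h2h : 2 * h + 1 ≤ m := by omega
  have hq1 : 1 ≤ q := by omega
  have hih : i < q ^ h := sum_lt q h t hq (by omega) c hc hc0 hch
  have hjh : j < q ^ h := sum_lt q h t hq (by omega) d hd hd0 hdh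
  have himod : i % q = 1 := mod_one q t hq c hc0
  have hjmod : j % q = 1 := mod_one q t hq d hd0
  have hqm1 : 1 ≤ q ^ m := Nat.one_le_pow _ _ (by omega)
  have hnm : q ^ m = n + 1 := by omega
  -- q^h < n
  have hhm : q ^ h < n := by
    have h1 : q ^ h * q ^ (m - h) = q ^ m := by
      rw [← pow_add]; congr 1; omega
    have h2 : 2 ≤ q ^ (m - h) := le_trans hq (Nat.le_self_pow (by omega) q)
    have h3 : 1 ≤ q ^ h := Nat.one_le_pow _ _ (by omega)
    have h8 : 2 ^ 3 ≤ q ^ m :=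
      le_trans (Nat.pow_le_pow_right (by norm_num) hm) (Nat.pow_le_pow_left hq m)
    nlinarith
  -- key lemma
  have key : ∀ v a b : ℕ, 1 ≤ v → v ≤ m - h → a < q ^ h → b < q ^ h →
      b % q = 1 → ¬ (a * q ^ v ≡ b [MOD n]) := by
    intro v a b hv1 hv2 ha hb hbq hmeq
    have hlt : a * q ^ v < n := by
      have h1 : a * q ^ v ≤ (q ^ h - 1) * q ^ (m - h) :=
        Nat.mul_le_mul (by omega) (Nat.pow_le_pow_right hq1 hv2)
      have h2 : q ^ h * q ^ (m - h) = q ^ m := by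
        rw [← pow_add]; congr 1; omega
      have h3 : 2 ≤ q ^ (m - h) := le_trans hq (Nat.le_self_pow (by omega) q)
      have h4 : (q ^ h - 1) * q ^ (m - h) = q ^ m - q ^ (m - h) := by
        rw [Nat.sub_mul, h2, one_mul]
      omega
    have heq : a * q ^ v = b := by
      have := hmeq
      unfold Nat.ModEq at this
      rwa [Nat.mod_eq_of_lt hlt, Nat.mod_eq_of_lt (lt_trans hb hhm)] at this
    have hdvd : q ∣ a * q ^ v := Dvd.dvd.mul_left (dvd_pow_self q (by omega)) a
    rw [heq] at hdvd
    omega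
  rcases Nat.eq_zero_or_pos u with hu0 | hu1
  · -- u = 0 : i = j
    apply hne
    rw [hu0, pow_zero, mul_one] at hmod
    have := hmod
    unfold Nat.ModEq at this
    rwa [Nat.mod_eq_of_lt (lt_trans hih hhm), Nat.mod_eq_of_lt (lt_trans hjh hhm)] at this
  rcases le_or_gt u (m - h) with hcase | hcase
  · exact key u i j hu1 hcase hih hjh hjmod hmod
  · -- u > m - h, use v = m - u
    have hv1 : 1 ≤ m - u := by omega
    have hv2 : m - u ≤ m - h := by omega
    have hsym : j * q ^ (m - u) ≡ i [MOD n] := by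
      have h1 : i * q ^ u * q ^ (m - u) ≡ j * q ^ (m - u) [MOD n] :=
        hmod.mul_right _
      have h2 : i * q ^ u * q ^ (m - u) = i * q ^ m := by
        rw [mul_assoc, ← pow_add]; congr 2; omega
      have h3 : i * q ^ m ≡ i * 1 [MOD n] := by
        apply Nat.ModEq.mul_left
        show q ^ m % n = 1 % n
        rw [hnm]
        exact Nat.add_mod_left n 1
      rw [h2] at h1
      calc j * q ^ (m - u) ≡ i * q ^ m [MOD n] := h1.symm
        _ ≡ i * 1 [MOD n] := h3
        _ = i := mul_one i
    exact key (m - u) j i hv1 hv2 hjh hih himod hsym
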